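/- In the pointwise setting of a spacelike codimension-2 immersion, the immersion is pseudo-umbilical (i.e. Ã_H = 0) if and only if 𝓑 − 𝓙 is a scalar multiple of the identity operator on V. -/

import Mathlib

open scoped RealInnerProductSpace

theorem stmt3
    {n : ℕ} (hn : 1 ≤ n)
    {V : Type*} [NormedAddCommGroup V] [InnerProductSpace ℝ V] [FiniteDimensional ℝ V]
    (hV : Module.finrank ℝ V = n)
    {W : Type*} [AddCommGroup W] [Module ℝ W] [FiniteDimensional ℝ W]
    (hW : Module.finrank ℝ W = 2)
    (gbar : W →ₗ[ℝ] W →ₗ[ℝ] ℝ)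
    (hgsymm : ∀ ξ η : W, gbar ξ η = gbar η ξ)
    (hgnd : ∀ ξ : W, (∀ η : W, gbar ξ η = 0) → ξ = 0)
    (h : V →ₗ[ℝ] V →ₗ[ℝ] W) (hsymm : ∀ X Y : V, h X Y = h Y X)
    (A : W →ₗ[ℝ] V →ₗ[ℝ] V)
    (hAsa : ∀ (ξ : W) (X Y : V), ⟪A ξ X, Y⟫ = ⟪X, A ξ Y⟫)
    (hAh : ∀ (ξ : W) (X Y : V), ⟪A ξ X, Y⟫ = gbar (h X Y) ξ)
    (H : W) (hH : ∀ ξ : W, gbar H ξ = (LinearMap.trace ℝ V (A ξ)) / (n : ℝ))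
    (At : W → (V →ₗ[ℝ] V))
    (hAt : ∀ ξ : W, At ξ = A ξ - ((LinearMap.trace ℝ V (A ξ)) / (n : ℝ)) • (LinearMap.id : V →ₗ[ℝ] V))
    (ξ₁ ξ₂ : W) (ε₁ ε₂ : ℝ)
    (hε₁ : ε₁ = 1 ∨ ε₁ = -1) (hε₂ : ε₂ = 1 ∨ ε₂ = -1)
    (hon₁ : gbar ξ₁ ξ₁ = ε₁) (hon₂ : gbar ξ₂ ξ₂ = ε₂) (hon₁₂ : gbar ξ₁ ξ₂ = 0)
    :
    At H = 0 ↔ ∃ c : ℝ, (ε₁ • (A ξ₁ ∘ₗ A ξ₁) + ε₂ • (A ξ₂ ∘ₗ A ξ₂)) - (ε₁ • (At ξ₁ ∘ₗ At ξ₁) + ε₂ • (At ξ₂ ∘ₗ At ξ₂)) = c • (LinearMap.id : V →ₗ[ℝ] V) := by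
  have hn0 : (n : ℝ) ≠ 0 := Nat.cast_ne_zero.mpr (by omega)
  have hε₁sq : ε₁ * ε₁ = 1 := by rcases hε₁ with h'|h' <;> rw [h'] <;> norm_num
  have hε₂sq : ε₂ * ε₂ = 1 := by rcases hε₂ with h'|h' <;> rw [h'] <;> norm_num
  have hε₁0 : ε₁ ≠ 0 := by rcases hε₁ with h'|h' <;> rw [h'] <;> norm_num
  have hε₂0 : ε₂ ≠ 0 := by rcases hε₂ with h'|h' <;> rw [h'] <;> norm_num
  -- ξ₁, ξ₂ form a basis of W
  have hli : LinearIndependent ℝ ![ξ₁, ξ₂] := by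
    rw [LinearIndependent.pair_iff]
    intro s t hst
    have h1 : gbar (s • ξ₁ + t • ξ₂) ξ₁ = 0 := by rw [hst]; simp
    have h2 : gbar (s • ξ₁ + t • ξ₂) ξ₂ = 0 := by rw [hst]; simp
    simp only [map_add, map_smul, LinearMap.add_apply, LinearMap.smul_apply,
      smul_eq_mul, hon₁, hon₂, hon₁₂, hgsymm ξ₂ ξ₁] at h1 h2
    constructor
    · have : s * ε₁ = 0 := by linarith [h1]
      rcases mul_eq_zero.mp this with h'|h'
      · exact h'
      · exact absurd h' hε₁0
    · have : t * ε₂ = 0 := by linarith [h2]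
      rcases mul_eq_zero.mp this with h'|h'
      · exact h'
      · exact absurd h' hε₂0
  have hζ : ∀ ζ : W, ∃ a b : ℝ, ζ = a • ξ₁ + b • ξ₂ := by
    intro ζ
    let b := basisOfLinearIndependentOfCardEqFinrank hli (by simp [hW])
    refine ⟨b.repr ζ 0, b.repr ζ 1, ?_⟩
    have hs := b.sum_repr ζ
    rw [Fin.sum_univ_two] at hs
    have h0 : b 0 = ξ₁ := by
      simp [b, coe_basisOfLinearIndependentOfCardEqFinrank]
    have h1 : b 1 = ξ₂ := by
      simp [b, coe_basisOfLinearIndependentOfCardEqFinrank]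
    rw [h0, h1] at hs
    exact hs.symm
  -- expansion of H in the basis
  have hexp : H = (ε₁ * gbar H ξ₁) • ξ₁ + (ε₂ * gbar H ξ₂) • ξ₂ := by
    set η := H - ((ε₁ * gbar H ξ₁) • ξ₁ + (ε₂ * gbar H ξ₂) • ξ₂) with hηdef
    have hη₁ : gbar η ξ₁ = 0 := by
      simp only [hηdef, map_sub, map_add, map_smul, LinearMap.sub_apply,
        LinearMap.add_apply, LinearMap.smul_apply, smul_eq_mul, hon₁, hon₁₂,
        hgsymm ξ₂ ξ₁]
      linear_combination (-(gbar H ξ₁)) * hε₁sq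
    have hη₂ : gbar η ξ₂ = 0 := by
      simp only [hηdef, map_sub, map_add, map_smul, LinearMap.sub_apply,
        LinearMap.add_apply, LinearMap.smul_apply, smul_eq_mul, hon₂, hon₁₂]
      linear_combination (-(gbar H ξ₂)) * hε₂sq
    have hηz : η = 0 := by
      apply hgnd
      intro ζ
      obtain ⟨a, b, rfl⟩ := hζ ζ
      simp [map_add, map_smul, hη₁, hη₂]
    exact sub_eq_zero.mp hηz
  -- A H in terms of A ξ₁, A ξ₂
  have hAH : A H = (ε₁ * gbar H ξ₁) • A ξ₁ + (ε₂ * gbar H ξ₂) • A ξ₂ := by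
    conv_lhs => rw [hexp]
    simp [map_add, map_smul]
  have hgHH : gbar H H = ε₁ * (gbar H ξ₁ * gbar H ξ₁) + ε₂ * (gbar H ξ₂ * gbar H ξ₂) := by
    nth_rewrite 2 [hexp]
    simp [map_add, map_smul, smul_eq_mul]
    ring
  -- key identity
  have key : (ε₁ • (A ξ₁ ∘ₗ A ξ₁) + ε₂ • (A ξ₂ ∘ₗ A ξ₂)) -
      (ε₁ • (At ξ₁ ∘ₗ At ξ₁) + ε₂ • (At ξ₂ ∘ₗ At ξ₂)) =
      (2 : ℝ) • At H + (gbar H H) • (LinearMap.id : V →ₗ[ℝ] V) := by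
    rw [hAt ξ₁, hAt ξ₂, hAt H, ← hH ξ₁, ← hH ξ₂, ← hH H, hAH, hgHH]
    ext x
    simp only [LinearMap.coe_comp, Function.comp_apply, LinearMap.add_apply,
      LinearMap.sub_apply, LinearMap.smul_apply, LinearMap.id_apply, map_sub,
      map_smul, map_add, smul_sub, smul_add]
    module
  constructor
  · intro h0
    refine ⟨gbar H H, ?_⟩
    rw [key, h0]
    simp
  · rintro ⟨c, hc⟩
    rw [key] at hc
    have h2 : (2 : ℝ) • At H = (c - gbar H H) • (LinearMap.id : V →ₗ[ℝ] V) := by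
      rw [sub_smul, ← hc]; abel
    have htr0 : LinearMap.trace ℝ V (At H) = 0 := by
      rw [hAt H, map_sub, map_smul, LinearMap.trace_id, hV]
      rw [smul_eq_mul, div_mul_cancel₀ _ hn0, sub_self]
    have hcg : (c - gbar H H) * n = 0 := by
      have := congrArg (LinearMap.trace ℝ V) h2
      rw [map_smul, map_smul, htr0, LinearMap.trace_id, hV, smul_eq_mul,
        smul_eq_mul, mul_zero] at this
      linarith [this]
    have hc0 : c - gbar H H = 0 := by
      rcases mul_eq_zero.mp hcg with h'|h'
      · exact h'
      · exact absurd h' hn0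
    rw [hc0, zero_smul] at h2
    rcases smul_eq_zero.mp h2 with h'|h'
    · norm_num at h'
    · exact h'
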